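/- Let a = (a_j)_{j≥1} ∈ ℓ². Then the operator Q_A : ⊕_{k=1}^∞ ℓ² → ℓ² whose k-th block A_k sends e_m (m ≥ 1) to a_{k+m} e_k − a_k e_{k+m}, satisfies Σ_{k=1}^∞ A_k A_k* = (Σ_j |a_j|²) I_{ℓ²} − A* A, where A : ℓ² → ℂ is the functional A x = Σ_j a_j x_j; equivalently Q_A Q_A* = (A A*) I_{ℓ²} − A* A. -/

import Mathlib

open Complex

noncomputable section

/-- Entry in row `i`, column `(k,m)` of the block operator `Q_A`:
the block `A_k` sends the basis vector `e m` to `a (k+m+1) • e k - a k • e (k+m+1)`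
(a 0-based version of the paper's 1-based construction). -/
def Qent (a : ℕ → ℂ) (k i m : ℕ) : ℂ :=
  (if i = k then a (k + m + 1) else 0) + (if i = k + m + 1 then -a k else 0)

lemma Qent_zero (a : ℕ → ℂ) {k i m : ℕ} (h1 : i ≠ k) (h2 : i ≠ k + m + 1) :
    Qent a k i m = 0 := by simp [Qent, h1, h2]

lemma Qent_row (a : ℕ → ℂ) (i m : ℕ) : Qent a i i m = a (i + m + 1) := by
  have : i ≠ i + m + 1 := by omega
  simp [Qent, this]

lemma Qent_col (a : ℕ → ℂ) {k i m : ℕ} (h1 : i ≠ k) (h2 : i = k + m + 1) :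
    Qent a k i m = -a k := by rw [Qent, if_neg h1, if_pos h2, zero_add]

lemma mul_conj_self (z : ℂ) : z * (starRingEnd ℂ) z = ((‖z‖ ^ 2 : ℝ) : ℂ) := by
  rw [Complex.mul_conj, Complex.normSq_eq_norm_sq]

/-- For `a ∈ ℓ²`, the blocks `A_k` of `Q_A` satisfy
`Σ_k A_k A_k* = (Σ_j |a_j|²) I − A* A`, i.e. `Q_A Q_A* = (A A*) I − A* A`,
stated entrywise: the `(i,j)` entry of `Σ_k A_k A_k*` is
`(Σ_n |a_n|²) δ_{ij} − conj (a i) * a j`. -/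
theorem stmt11 (a : ℕ → ℂ) (ha : Summable fun j => ‖a j‖ ^ 2) :
    ∀ i j : ℕ,
      (∑' p : ℕ × ℕ, Qent a p.1 i p.2 * (starRingEnd ℂ) (Qent a p.1 j p.2)) =
        ((∑' n, ‖a n‖ ^ 2 : ℝ) : ℂ) * (if i = j then 1 else 0) -
          (starRingEnd ℂ) (a i) * a j := by
  intro i j
  rcases eq_or_ne i j with hij | hij
  · -- diagonal case
    subst hij
    set G1 : ℕ × ℕ → ℂ := fun p => if p.1 = i then ((‖a (p.1 + p.2 + 1)‖ ^ 2 : ℝ) : ℂ) else 0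
      with hG1def
    set G2 : ℕ × ℕ → ℂ := fun p => if p.1 + p.2 + 1 = i then ((‖a p.1‖ ^ 2 : ℝ) : ℂ) else 0
      with hG2def
    have hpt : ∀ p : ℕ × ℕ,
        Qent a p.1 i p.2 * (starRingEnd ℂ) (Qent a p.1 i p.2) = G1 p + G2 p := by
      rintro ⟨k, m⟩
      by_cases h1 : i = k
      · subst h1
        have h2 : ¬ (i + m + 1 = i) := by omega
        simp only [hG1def, hG2def, if_pos rfl, if_neg h2, add_zero]
        rw [Qent_row, mul_conj_self]
      · by_cases h2 : i = k + m + 1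
        · rw [Qent_col a (fun h => h1 h) h2]
          have : ¬ (k = i) := fun h => h1 h.symm
          simp only [hG1def, hG2def, if_neg this, if_pos h2.symm, zero_add, map_neg,
            neg_mul_neg]
          rw [mul_conj_self]
        · rw [Qent_zero a h1 h2]
          have h1' : ¬ (k = i) := fun h => h1 h.symm
          have h2' : ¬ (k + m + 1 = i) := fun h => h2 h.symm
          simp [hG1def, hG2def, h1', h2']
    have hinj : Function.Injective (fun m : ℕ => ((i, m) : ℕ × ℕ)) := by
      intro x y h; simpa using h
    have hzero : ∀ p ∉ Set.range (fun m : ℕ => ((i, m) : ℕ × ℕ)), G1 p = 0 := by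
      rintro ⟨k, m⟩ hp
      have : ¬ (k = i) := by
        intro hk; exact hp ⟨m, by simp [hk]⟩
      simp [hG1def, this]
    have hsupp : Function.support G1 ⊆ Set.range (fun m : ℕ => ((i, m) : ℕ × ℕ)) := by
      rintro ⟨k, m⟩ h
      have : k = i := by by_contra hk; exact h (by simp [hG1def, hk])
      exact ⟨m, by simp [this]⟩
    have hrow : Summable fun m : ℕ => ((‖a (i + m + 1)‖ ^ 2 : ℝ) : ℂ) := by
      have := (summable_nat_add_iff (f := fun n => ‖a n‖ ^ 2) (i + 1)).2 ha
      have := this.map (Complex.ofRealHom) Complex.continuous_ofReal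
      apply this.congr
      intro m
      simp only [Function.comp]
      norm_num
      ring_nf
    have hG1sum : Summable G1 := by
      rw [← hinj.summable_iff hzero]
      exact hrow.congr fun m => by simp [hG1def]
    have s2 : Finset (ℕ × ℕ) := (Finset.range i).image (fun k => (k, i - k - 1))
    have hG2zero : ∀ p ∉ (Finset.range i).image (fun k => ((k, i - k - 1) : ℕ × ℕ)),
        G2 p = 0 := by
      rintro ⟨k, m⟩ hp
      by_contra h
      have hk : k + m + 1 = i := by by_contra hk; exact h (by simp [hG2def, hk])
      exact hp (Finset.mem_image.2 ⟨k, Finset.mem_range.2 (by omega),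
        by simp [Prod.ext_iff]; omega⟩)
    have hG2sum : Summable G2 := summable_of_ne_finset_zero hG2zero
    calc (∑' p : ℕ × ℕ, Qent a p.1 i p.2 * (starRingEnd ℂ) (Qent a p.1 i p.2))
        = ∑' p : ℕ × ℕ, (G1 p + G2 p) := tsum_congr hpt
      _ = (∑' p, G1 p) + ∑' p, G2 p := Summable.tsum_add hG1sum hG2sum
      _ = (∑' m : ℕ, ((‖a (i + m + 1)‖ ^ 2 : ℝ) : ℂ))
            + ∑ k ∈ Finset.range i, ((‖a k‖ ^ 2 : ℝ) : ℂ) := by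
          congr 1
          · rw [← hinj.tsum_eq (by simpa using hsupp)]
            exact tsum_congr fun m => by simp [hG1def]
          · rw [tsum_eq_sum hG2zero, Finset.sum_image]
            · apply Finset.sum_congr rfl
              intro k hk
              have : k + (i - k - 1) + 1 = i := by
                have := Finset.mem_range.1 hk; omega
              simp [hG2def, this]
            · intro x _ y _ h
              exact (Prod.ext_iff.1 h).1
      _ = ((∑' n, ‖a n‖ ^ 2 : ℝ) : ℂ) * (if i = i then 1 else 0)
            - (starRingEnd ℂ) (a i) * a i := by
          rw [if_pos rfl, mul_one, mul_comm ((starRingEnd ℂ) (a i)), mul_conj_self]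
          have hreal : (∑' m : ℕ, ‖a (m + (i + 1))‖ ^ 2)
              + ∑ k ∈ Finset.range i, ‖a k‖ ^ 2
              = (∑' n, ‖a n‖ ^ 2) - ‖a i‖ ^ 2 := by
            have h1 := ha.sum_add_tsum_nat_add (f := fun n => ‖a n‖ ^ 2) (i + 1)
            rw [Finset.sum_range_succ] at h1
            linarith
          have : (∑' m : ℕ, ((‖a (i + m + 1)‖ ^ 2 : ℝ) : ℂ))
              = ((∑' m : ℕ, ‖a (m + (i + 1))‖ ^ 2 : ℝ) : ℂ) := by
            rw [Complex.ofReal_tsum]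
            exact tsum_congr fun m => by rw [show i + m + 1 = m + (i + 1) by omega]
          rw [this]
          exact_mod_cast hreal
  · -- off-diagonal case
    rw [if_neg hij, mul_zero, zero_sub]
    rcases lt_or_gt_of_ne hij with hlt | hlt
    · rw [tsum_eq_single ((i, j - i - 1) : ℕ × ℕ)]
      · have h1 : Qent a i i (j - i - 1) = a j := by
          rw [Qent_row]; congr 1; omega
        have h2 : Qent a i j (j - i - 1) = -a i := by
          apply Qent_col a (Ne.symm hij); omega
        rw [h1, h2, map_neg]; ring
      · rintro ⟨k, m⟩ hp
        by_cases hik : i = k ∨ i = k + m + 1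
        · by_cases hjk : j = k ∨ j = k + m + 1
          · exfalso
            rcases hik with h | h <;> rcases hjk with h' | h' <;> try omega
            exact hp (by simp [Prod.ext_iff]; omega)
          · push_neg at hjk
            rw [Qent_zero a hjk.1 hjk.2, map_zero, mul_zero]
        · push_neg at hik
          rw [Qent_zero a hik.1 hik.2, zero_mul]
    · rw [tsum_eq_single ((j, i - j - 1) : ℕ × ℕ)]
      · have h1 : Qent a j i (i - j - 1) = -a j := by
          apply Qent_col a hij; omega
        have h2 : Qent a j j (i - j - 1) = a i := by
          rw [Qent_row]; congr 1; omega
        rw [h1, h2]; ring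
      · rintro ⟨k, m⟩ hp
        by_cases hik : i = k ∨ i = k + m + 1
        · by_cases hjk : j = k ∨ j = k + m + 1
          · exfalso
            rcases hik with h | h <;> rcases hjk with h' | h' <;> try omega
            exact hp (by simp [Prod.ext_iff]; omega)
          · push_neg at hjk
            rw [Qent_zero a hjk.1 hjk.2, map_zero, mul_zero]
        · push_neg at hik
          rw [Qent_zero a hik.1 hik.2, zero_mul]
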